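/- arXiv:1703.06736 — 6 statements merged into one kernel-verified Lean document; each statement's English description precedes it below -/
import Mathlib

section
/- Along every positive solution of the linear open-access harvest model with 0 ≤ z < 1, the quantity H(x,y) = α·(c·log x − b q x^{1−z}/(1−z)) + r·log y − q·y is conserved: if x, y : ℝ → ℝ are differentiable with x(t) > 0 and y(t) > 0 for all t, and satisfy x'(t) = r x(t) − q x(t) y(t) and y'(t) = α (b q x(t)^{1−z} y(t) − c y(t)) for all t, then t ↦ H(x(t), y(t)) is constant. -/
/-- Along every positive solution of the linear open-access harvest model
with `0 ≤ z < 1`, the quantity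
`H(x,y) = α·(c·log x − b q x^(1−z)/(1−z)) + r·log y − q·y` is conserved. -/
theorem conserved_quantity_linear_model
    (r q c b α z : ℝ) (hr : 0 < r) (hq : 0 < q) (hc : 0 < c)
    (hb : 0 < b) (hα : 0 < α) (hz0 : 0 ≤ z) (hz1 : z < 1)
    (x y : ℝ → ℝ)
    (hxpos : ∀ t, 0 < x t) (hypos : ∀ t, 0 < y t)
    (hx : ∀ t, HasDerivAt x (r * x t - q * x t * y t) t)
    (hy : ∀ t, HasDerivAt y (α * (b * q * (x t) ^ (1 - z) * y t - c * y t)) t) :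
    ∀ s t : ℝ,
      α * (c * Real.log (x s) - b * q * (x s) ^ (1 - z) / (1 - z))
          + r * Real.log (y s) - q * y s
        = α * (c * Real.log (x t) - b * q * (x t) ^ (1 - z) / (1 - z))
          + r * Real.log (y t) - q * y t := by
  set F : ℝ → ℝ := fun t =>
    α * (c * Real.log (x t) - b * q * (x t) ^ (1 - z) / (1 - z))
      + r * Real.log (y t) - q * y t with hF
  have key : ∀ t, HasDerivAt F 0 t := by
    intro t
    have hxt := hxpos t
    have hyt := hypos t
    have hx' := hx t
    have hy' := hy t
    have hlogx : HasDerivAt (fun t => Real.log (x t))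
        ((r * x t - q * x t * y t) / x t) t := hx'.log hxt.ne'
    have hpow : HasDerivAt (fun t => (x t) ^ (1 - z))
        ((r * x t - q * x t * y t) * (1 - z) * (x t) ^ (1 - z - 1)) t :=
      hx'.rpow_const (Or.inl hxt.ne')
    have hlogy : HasDerivAt (fun t => Real.log (y t))
        ((α * (b * q * (x t) ^ (1 - z) * y t - c * y t)) / y t) t := hy'.log hyt.ne'
    have hD : HasDerivAt F
        (α * (c * ((r * x t - q * x t * y t) / x t)
              - b * q * ((r * x t - q * x t * y t) * (1 - z) * (x t) ^ (1 - z - 1)) / (1 - z))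
          + r * ((α * (b * q * (x t) ^ (1 - z) * y t - c * y t)) / y t)
          - q * (α * (b * q * (x t) ^ (1 - z) * y t - c * y t))) t := by
      exact (((hlogx.const_mul c).sub ((hpow.const_mul (b * q)).div_const (1 - z))).const_mul
        α |>.add (hlogy.const_mul r)).sub (hy'.const_mul q)
    convert hD using 1
    have h1z : (1 : ℝ) - z ≠ 0 := by linarith
    have hsub : (x t) ^ (1 - z - 1) = (x t) ^ (1 - z) / x t := by
      rw [Real.rpow_sub hxt, Real.rpow_one]
    rw [hsub]
    field_simp
    ring
  have hdiff : Differentiable ℝ F := fun t => (key t).differentiableAt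
  have hderiv : ∀ t, deriv F t = 0 := fun t => (key t).deriv
  intro s t
  exact is_const_of_deriv_eq_zero hdiff hderiv s t
end

section
/- For z > 1, the stable direction of the saddle equilibrium of the linear open-access harvest model has slope b·√(α r (z−1)/c)·(c/(b q))^{z/(z−1)}: the Fréchet derivative at (x*, y*) = ((c/(b q))^{1/(1−z)}, r/q) of the vector field F(x,y) = (r x − q x y, α (b q x^{1−z} y − c y)) maps the vector (1, s), where s = b·√(α r (z−1)/c)·(c/(b q))^{z/(z−1)}, to (−√(α r c (z−1)))·(1, s); i.e. (1, s) is an eigenvector with negative eigenvalue −√(α r c (z−1)). -/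
/-- For `z > 1`, the vector `(1, s)` with
`s = b·√(α r (z−1)/c)·(c/(bq))^(z/(z−1))` is an eigenvector, with negative eigenvalue
`−√(α r c (z−1))`, of the Fréchet derivative of the linear open-access harvest vector
field at the saddle equilibrium `(x*, y*) = ((c/(bq))^(1/(1−z)), r/q)`. -/
theorem linear_model_stable_direction
    (r q c b α z : ℝ) (hr : 0 < r) (hq : 0 < q) (hc : 0 < c)
    (hb : 0 < b) (hα : 0 < α) (hz : 1 < z) :
    let F : ℝ × ℝ → ℝ × ℝ := fun p =>
      (r * p.1 - q * p.1 * p.2, α * (b * q * p.1 ^ (1 - z) * p.2 - c * p.2))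
    let xstar : ℝ := (c / (b * q)) ^ (1 / (1 - z))
    let ystar : ℝ := r / q
    let s : ℝ := b * Real.sqrt (α * r * (z - 1) / c) * (c / (b * q)) ^ (z / (z - 1))
    ∃ A : ℝ × ℝ →L[ℝ] ℝ × ℝ, HasFDerivAt F A (xstar, ystar) ∧
      A (1, s) = (-(Real.sqrt (α * r * c * (z - 1)))) • ((1 : ℝ), s) := by
  intro F xstar ystar s
  have hK : 0 < c / (b * q) := div_pos hc (mul_pos hb hq)
  have hz1 : (1 : ℝ) - z ≠ 0 := by linarith
  have hz1' : z - 1 ≠ 0 := by linarith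
  have hx : 0 < xstar := Real.rpow_pos_of_pos hK _
  set K : ℝ := c / (b * q) with hKdef
  have hy : ystar = r / q := rfl
  have hs : s = b * Real.sqrt (α * r * (z - 1) / c) * K ^ (z / (z - 1)) := rfl
  set a : ℝ := -(q * xstar) with ha
  set d : ℝ := α * (b * q * ((1 - z) * xstar ^ (-z)) * ystar) with hd
  have hbqK : b * q * K = c := by rw [hKdef]; field_simp
  refine ⟨(a • ContinuousLinearMap.snd ℝ ℝ ℝ).prod (d • ContinuousLinearMap.fst ℝ ℝ ℝ),
    ?_, ?_⟩
  · -- derivative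
    have hx1z : xstar ^ (1 - z) = K := by
      rw [show xstar ^ (1 - z) = K ^ ((1 / (1 - z)) * (1 - z)) by
        rw [Real.rpow_mul hK.le]]
      rw [one_div_mul_cancel hz1, Real.rpow_one]
    have h1 : HasFDerivAt (fun p : ℝ × ℝ => r * p.1 - q * p.1 * p.2)
        (a • ContinuousLinearMap.snd ℝ ℝ ℝ) (xstar, ystar) := by
      have h := ((hasFDerivAt_fst (𝕜 := ℝ) (p := (xstar, ystar))).const_mul r).sub
        (((hasFDerivAt_fst (𝕜 := ℝ) (p := (xstar, ystar))).const_mul q).mul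
          (hasFDerivAt_snd (𝕜 := ℝ) (p := (xstar, ystar))))
      refine h.congr_fderiv ?_
      refine ContinuousLinearMap.ext fun p => ?_
      simp only [ContinuousLinearMap.sub_apply, ContinuousLinearMap.add_apply,
        ContinuousLinearMap.coe_smul', Pi.smul_apply, ContinuousLinearMap.coe_fst',
        ContinuousLinearMap.coe_snd', smul_eq_mul, ContinuousLinearMap.smul_apply]
      rw [ha, hy]
      field_simp
      ring
    have h2 : HasFDerivAt
        (fun p : ℝ × ℝ => α * (b * q * p.1 ^ (1 - z) * p.2 - c * p.2))
        (d • ContinuousLinearMap.fst ℝ ℝ ℝ) (xstar, ystar) := by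
      have hr1 : HasFDerivAt (fun p : ℝ × ℝ => p.1 ^ (1 - z))
          (((1 - z) * xstar ^ (1 - z - 1)) • ContinuousLinearMap.fst ℝ ℝ ℝ)
          (xstar, ystar) :=
        (hasFDerivAt_fst (p := (xstar, ystar))).rpow_const (Or.inl hx.ne')
      have h := (((hr1.const_mul (b * q)).mul
        (hasFDerivAt_snd (𝕜 := ℝ) (p := (xstar, ystar)))).sub
        ((hasFDerivAt_snd (𝕜 := ℝ) (p := (xstar, ystar))).const_mul c)).const_mul α
      refine h.congr_fderiv ?_
      have hexp : (1 : ℝ) - z - 1 = -z := by ring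
      refine ContinuousLinearMap.ext fun p => ?_
      simp only [ContinuousLinearMap.sub_apply, ContinuousLinearMap.add_apply,
        ContinuousLinearMap.coe_smul', Pi.smul_apply, ContinuousLinearMap.coe_fst',
        ContinuousLinearMap.coe_snd', smul_eq_mul, ContinuousLinearMap.smul_apply]
      rw [hd, hexp, hx1z, hbqK]
      ring
    exact h1.prodMk h2
  · -- eigenvector equation
    have hzpos : 0 < z - 1 := by linarith
    have hT : 0 ≤ α * r * (z - 1) / c := by positivity
    set T : ℝ := Real.sqrt (α * r * (z - 1) / c) with hTdef
    have hTT : T * T = α * r * (z - 1) / c := Real.mul_self_sqrt hT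
    have hsq : Real.sqrt (α * r * c * (z - 1)) = c * T := by
      rw [show α * r * c * (z - 1) = c ^ 2 * (α * r * (z - 1) / c) by
        field_simp]
      rw [Real.sqrt_mul (sq_nonneg c), Real.sqrt_sq hc.le, hTdef]
    have hxz : xstar ^ (-z) = K ^ (z / (z - 1)) := by
      rw [show xstar ^ (-z) = K ^ ((1 / (1 - z)) * (-z)) by rw [Real.rpow_mul hK.le]]
      congr 1
      field_simp
      ring
    have hxK : xstar * K ^ (z / (z - 1)) = K := by
      rw [show xstar * K ^ (z / (z - 1)) = K ^ (1 / (1 - z) + z / (z - 1)) by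
        rw [Real.rpow_add hK]]
      rw [show (1 / (1 - z) + z / (z - 1)) = 1 by field_simp; ring, Real.rpow_one]
    have h1 : a * s = -(Real.sqrt (α * r * c * (z - 1))) := by
      rw [hsq, ha, hs]
      have : -(q * xstar) * (b * T * K ^ (z / (z - 1)))
          = -(b * q * (xstar * K ^ (z / (z - 1))) * T) := by ring
      rw [this, hxK, hbqK]
    have h2 : d = -(Real.sqrt (α * r * c * (z - 1))) * s := by
      rw [hsq, hd, hxz, hs, hy]
      have : -(c * T) * (b * T * K ^ (z / (z - 1)))
          = -(c * (T * T) * b * K ^ (z / (z - 1))) := by ring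
      rw [this, hTT]
      field_simp
      ring
    have hA : ((a • ContinuousLinearMap.snd ℝ ℝ ℝ).prod
        (d • ContinuousLinearMap.fst ℝ ℝ ℝ)) ((1 : ℝ), s) = (a * s, d * 1) := by
      simp [ContinuousLinearMap.prod_apply]
    rw [hA, mul_one, h1, h2, Prod.smul_def, smul_eq_mul, smul_eq_mul, mul_one]
end

section
/- Fix positive reals α, r, c, b, q with c < b q. The map z ↦ b^{1/(1−z)} · c^{(z+1)/(2z−2)} · q^{z/(1−z)} · √(α r (z−1)) is strictly increasing on the interval (1, ∞). -/
/-- for fixed positive `α, r, c, b, q` with `c < b q`, the separatrix slope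
`z ↦ b^(1/(1−z)) · c^((z+1)/(2z−2)) · q^(z/(1−z)) · √(α r (z−1))` is strictly increasing
on `(1, ∞)`. -/
theorem separatrix_slope_increasing_in_z
    (α r c b q : ℝ) (hα : 0 < α) (hr : 0 < r) (hc : 0 < c)
    (hb : 0 < b) (hq : 0 < q) (hcbq : c < b * q) :
    StrictMonoOn
      (fun z : ℝ =>
        b ^ (1 / (1 - z)) * c ^ ((z + 1) / (2 * z - 2)) * q ^ (z / (1 - z))
          * Real.sqrt (α * r * (z - 1)))
      (Set.Ioi 1) := by
  have hlog : Real.log (c / (b * q)) = Real.log c - (Real.log b + Real.log q) := by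
    rw [Real.log_div hc.ne' (by positivity), Real.log_mul hb.ne' hq.ne']
  have key : ∀ z ∈ Set.Ioi (1:ℝ),
      b ^ (1 / (1 - z)) * c ^ ((z + 1) / (2 * z - 2)) * q ^ (z / (1 - z))
        * Real.sqrt (α * r * (z - 1))
      = (Real.sqrt c / q * Real.sqrt (α * r)) *
        (Real.exp (Real.log (c / (b * q)) / (z - 1)) * Real.sqrt (z - 1)) := by
    intro z hz
    have hz1 : (1:ℝ) < z := hz
    have h1 : z - 1 ≠ 0 := by have : (1:ℝ) < z := hz1; intro h; nlinarith
    have h2 : 1 - z ≠ 0 := by intro h; apply h1; linarith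
    have h3 : 2 * z - 2 ≠ 0 := by intro h; apply h1; linarith
    have hsc : Real.sqrt c = Real.exp (Real.log c / 2) := by
      rw [Real.sqrt_eq_rpow, Real.rpow_def_of_pos hc]; ring_nf
    have hcq : Real.sqrt c / q = Real.exp (Real.log c / 2 - Real.log q) := by
      rw [Real.exp_sub, Real.exp_log hq, hsc]
    have hE : Real.log b * (1 / (1 - z)) + Real.log c * ((z + 1) / (2 * z - 2))
        + Real.log q * (z / (1 - z))
        = (Real.log c / 2 - Real.log q)
          + (Real.log c - (Real.log b + Real.log q)) / (z - 1) := by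
      field_simp
      ring
    rw [Real.rpow_def_of_pos hb, Real.rpow_def_of_pos hc, Real.rpow_def_of_pos hq,
      Real.sqrt_mul (by positivity : (0:ℝ) ≤ α * r), hlog, hcq,
      ← Real.exp_add, ← Real.exp_add, hE, Real.exp_add]
    ring
  intro x hx y hy hxy
  simp only
  rw [key x hx, key y hy]
  have hx1 : (1:ℝ) < x := hx
  have hy1 : (1:ℝ) < y := hy
  have hL : Real.log (c / (b * q)) < 0 := by
    apply Real.log_neg (by positivity)
    rw [div_lt_one (by positivity)]
    linarith
  have hinv : (y - 1)⁻¹ < (x - 1)⁻¹ := by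
    apply inv_strictAnti₀ (by linarith) (by linarith)
  have hexp : Real.exp (Real.log (c / (b * q)) / (x - 1))
      < Real.exp (Real.log (c / (b * q)) / (y - 1)) := by
    apply Real.exp_lt_exp.mpr
    rw [div_eq_mul_inv, div_eq_mul_inv]
    exact mul_lt_mul_of_neg_left hinv hL
  have hsqrt : Real.sqrt (x - 1) < Real.sqrt (y - 1) :=
    Real.sqrt_lt_sqrt (by linarith) (by linarith)
  apply mul_lt_mul_of_pos_left _ (by positivity)
  exact mul_lt_mul'' hexp hsqrt (Real.exp_pos _).le (Real.sqrt_nonneg _)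
end

section
/- In the linear-growth harvest model with minimum price a and z = 2, if c > 2 q √(a b), then the smaller positive equilibrium (x₁, r/q), with x₁ = (c − √(c² − 4 a b q²))/(2 a q), is a saddle: the Fréchet derivative at (x₁, r/q) of the vector field F(x,y) = (r x − q x y, α ((a + b/x²) q x y − c y)), viewed as a linear map ℝ² → ℝ², has strictly negative determinant. -/
/-- in the linear-growth harvest model with minimum price `a` and `z = 2`,
if `c > 2q√(ab)` then the smaller positive equilibrium `(x₁, r/q)`, with
`x₁ = (c − √(c² − 4abq²))/(2aq)`, is a saddle: the Fréchet derivative of the vector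
field there has strictly negative determinant. -/
theorem min_price_z_two_saddle
    (r q c b α a : ℝ) (hr : 0 < r) (hq : 0 < q) (hc : 0 < c)
    (hb : 0 < b) (hα : 0 < α) (ha : 0 < a)
    (hgt : 2 * q * Real.sqrt (a * b) < c) :
    let F : ℝ × ℝ → ℝ × ℝ := fun p =>
      (r * p.1 - q * p.1 * p.2,
       α * ((a + b / p.1 ^ 2) * q * p.1 * p.2 - c * p.2))
    let x1 : ℝ := (c - Real.sqrt (c ^ 2 - 4 * a * b * q ^ 2)) / (2 * a * q)
    ∃ A : ℝ × ℝ →L[ℝ] ℝ × ℝ, HasFDerivAt F A (x1, r / q) ∧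
      (A (1, 0)).1 * (A (0, 1)).2 - (A (0, 1)).1 * (A (1, 0)).2 < 0 := by
  intro F x1
  set s : ℝ := Real.sqrt (c ^ 2 - 4 * a * b * q ^ 2) with hs_def
  have hdisc : 0 < c ^ 2 - 4 * a * b * q ^ 2 := by
    have h1 : 0 ≤ 2 * q * Real.sqrt (a * b) := by positivity
    have h2 : (2 * q * Real.sqrt (a * b)) ^ 2 < c ^ 2 := by nlinarith
    have h3 : Real.sqrt (a * b) ^ 2 = a * b := Real.sq_sqrt (by positivity)
    nlinarith [h3]
  have hs_pos : 0 < s := Real.sqrt_pos.mpr hdisc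
  have hs_sq : s ^ 2 = c ^ 2 - 4 * a * b * q ^ 2 := Real.sq_sqrt hdisc.le
  have hs_lt : s < c := by
    by_contra h
    push_neg at h
    have h2 : c ^ 2 ≤ s ^ 2 := pow_le_pow_left₀ hc.le h 2
    nlinarith [mul_pos (mul_pos ha hb) (pow_pos hq 2)]
  have hx1_pos : 0 < x1 := by
    have : 0 < c - s := by linarith
    exact div_pos this (by positivity)
  have hx1_ne : x1 ≠ 0 := ne_of_gt hx1_pos
  -- equilibrium equation
  have key : a * q * x1 ^ 2 - c * x1 + b * q = 0 := by
    show a * q * ((c - s) / (2 * a * q)) ^ 2 - c * ((c - s) / (2 * a * q)) + b * q = 0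
    have haq : (2 * a * q) ≠ 0 := by positivity
    field_simp
    nlinarith [hs_sq]
  have hax : a * x1 ^ 2 < b := by
    -- a x1^2 = (c x1 - b q)/q ; need c x1 < 2 b q
    have hcx : c * x1 < 2 * b * q := by
      show c * ((c - s) / (2 * a * q)) < 2 * b * q
      rw [← mul_div_assoc, div_lt_iff₀ (by positivity)]
      nlinarith [hs_sq, hs_pos, hs_lt]
    nlinarith [key, hq]
  have hp1 : ((x1, r / q) : ℝ × ℝ).1 = x1 := rfl
  have hp2 : ((x1, r / q) : ℝ × ℝ).2 = r / q := rfl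
  -- derivative of first component
  have hfst : HasFDerivAt (fun p : ℝ × ℝ => p.1) (ContinuousLinearMap.fst ℝ ℝ ℝ) (x1, r / q) :=
    hasFDerivAt_fst
  have hsnd : HasFDerivAt (fun p : ℝ × ℝ => p.2) (ContinuousLinearMap.snd ℝ ℝ ℝ) (x1, r / q) :=
    hasFDerivAt_snd
  have hF1 := (hfst.const_mul r).sub ((hfst.const_mul q).mul hsnd)
  have hpow := hfst.mul hfst
  simp only [← pow_two] at hpow
  have hne2 : ((x1, r / q) : ℝ × ℝ).1 ^ 2 ≠ 0 := by simpa using pow_ne_zero 2 hx1_ne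
  have hg : HasDerivAt (fun t : ℝ => b / t ^ 2)
      ((0 * x1 ^ 2 - b * (↑2 * x1 ^ (2 - 1))) / (x1 ^ 2) ^ 2) x1 :=
    (hasDerivAt_const x1 b).div (hasDerivAt_pow 2 x1) (pow_ne_zero 2 hx1_ne)
  have hdiv := HasDerivAt.comp_hasFDerivAt ((x1, r / q) : ℝ × ℝ) hg hfst
  have hinner := ((((hasFDerivAt_const a ((x1, r / q) : ℝ × ℝ)).add hdiv).mul_const q).mul hfst).mul hsnd
  have hF2 := ((hinner.sub (hsnd.const_mul c)).const_mul α)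
  have hA := HasFDerivAt.prodMk hF1 hF2
  refine ⟨_, hA, ?_⟩
  have e10 : ∀ L1 L2 : ℝ × ℝ →L[ℝ] ℝ, (L1.prod L2) ((1:ℝ), (0:ℝ)) = (L1 (1,0), L2 (1,0)) :=
    fun _ _ => rfl
  simp only [ContinuousLinearMap.prod_apply, ContinuousLinearMap.add_apply,
    ContinuousLinearMap.sub_apply, ContinuousLinearMap.smul_apply,
    ContinuousLinearMap.coe_fst', ContinuousLinearMap.coe_snd',
    ContinuousLinearMap.zero_apply, smul_eq_mul, Function.comp]
  norm_num
  have h0 : r - r / q * q = 0 := by field_simp; ring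
  rw [h0, zero_mul, zero_add]
  have hEeq : q * x1 * (α * (r / q * ((a + b / x1 ^ 2) * q +
      x1 * (q * (-(b * (2 * x1)) / (x1 ^ 2) ^ 2))))) = α * r * q * (a * x1 ^ 2 - b) / x1 := by
    field_simp
    ring
  rw [hEeq]
  have hnum : α * r * q * (a * x1 ^ 2 - b) < 0 :=
    mul_neg_of_pos_of_neg (by positivity) (by linarith)
  exact div_neg_of_neg_of_pos hnum hx1_pos
end

section
/- In the linear-growth harvest model with minimum price a and z = 1/2, the vector field F(x,y) = (r x − q x y, α ((a + b/√x) q x y − c y)) vanishes at the point (x̂, r/q) with x̂ = (2 a c + b² q − b √(4 a c q + b² q²))/(2 a² q), x̂ > 0; moreover the Fréchet derivative of F at (x̂, r/q), viewed as a linear map ℝ² → ℝ², has trace equal to zero. -/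
/-- in the linear-growth harvest model with minimum price `a` and
`z = 1/2`, the vector field vanishes at `(x̂, r/q)` with
`x̂ = (2ac + b²q − b√(4acq + b²q²))/(2a²q) > 0`, and the Fréchet derivative of the
vector field at `(x̂, r/q)` has trace zero. -/
theorem min_price_z_half_equilibrium
    (r q c b α a : ℝ) (hr : 0 < r) (hq : 0 < q) (hc : 0 < c)
    (hb : 0 < b) (hα : 0 < α) (ha : 0 < a) :
    let F : ℝ × ℝ → ℝ × ℝ := fun p =>
      (r * p.1 - q * p.1 * p.2,
       α * ((a + b / Real.sqrt p.1) * q * p.1 * p.2 - c * p.2))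
    let xhat : ℝ :=
      (2 * a * c + b ^ 2 * q - b * Real.sqrt (4 * a * c * q + b ^ 2 * q ^ 2))
        / (2 * a ^ 2 * q)
    0 < xhat ∧
    (r * xhat - q * xhat * (r / q) = 0 ∧
     α * ((a + b / Real.sqrt xhat) * q * xhat * (r / q) - c * (r / q)) = 0) ∧
    ∃ A : ℝ × ℝ →L[ℝ] ℝ × ℝ, HasFDerivAt F A (xhat, r / q) ∧
      (A (1, 0)).1 + (A (0, 1)).2 = 0 := by
  intro F xhat
  have hD : (0:ℝ) < 4 * a * c * q + b ^ 2 * q ^ 2 := by positivity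
  set S := Real.sqrt (4 * a * c * q + b ^ 2 * q ^ 2) with hSdef
  have hS2 : S ^ 2 = 4 * a * c * q + b ^ 2 * q ^ 2 := Real.sq_sqrt hD.le
  have hSgt : b * q < S := by
    have h1 : (b * q) ^ 2 < S ^ 2 := by
      nlinarith [mul_pos (mul_pos ha hc) hq]
    exact lt_of_pow_lt_pow_left₀ 2 (Real.sqrt_nonneg _) h1
  set s : ℝ := (S - b * q) / (2 * a * q) with hsdef
  have hs_pos : 0 < s := by
    apply div_pos (by linarith) (by positivity)
  have hs2 : s ^ 2 = xhat := by
    show ((S - b * q) / (2 * a * q)) ^ 2 = _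
    rw [div_pow]
    rw [div_eq_div_iff (by positivity) (by positivity)]
    nlinarith [hS2]
  have hx_pos : 0 < xhat := by rw [← hs2]; positivity
  have hsqrt : Real.sqrt xhat = s := by
    rw [← hs2, Real.sqrt_sq hs_pos.le]
  have hkey0 : a * q * s ^ 2 + b * q * s = c := by
    rw [hsdef]
    field_simp
    nlinarith [hS2]
  have key : (a + b / Real.sqrt xhat) * q * xhat = c := by
    rw [hsqrt, ← hs2]
    have hsne : s ≠ 0 := hs_pos.ne'
    field_simp
    linear_combination hkey0
  refine ⟨hx_pos, ⟨by field_simp; ring, by rw [key]; ring⟩, ?_⟩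
  -- derivative
  have hxne : xhat ≠ 0 := hx_pos.ne'
  have hsne : Real.sqrt xhat ≠ 0 := by rw [hsqrt]; exact hs_pos.ne'
  have hsq : HasDerivAt Real.sqrt (1 / (2 * Real.sqrt xhat)) xhat :=
    Real.hasDerivAt_sqrt hxne
  have hbdiv : HasDerivAt (fun x : ℝ => b / Real.sqrt x)
      ((0 * Real.sqrt xhat - b * (1 / (2 * Real.sqrt xhat))) / Real.sqrt xhat ^ 2) xhat :=
    (hasDerivAt_const xhat b).div hsq hsne
  have hφ : HasDerivAt (fun x : ℝ => (a + b / Real.sqrt x) * q * x)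
      ((((0 : ℝ) + (0 * Real.sqrt xhat - b * (1 / (2 * Real.sqrt xhat))) / Real.sqrt xhat ^ 2) * q) * xhat
        + ((a + b / Real.sqrt xhat) * q) * 1) xhat := by
    exact (((hasDerivAt_const xhat a).add hbdiv).mul_const q).mul (hasDerivAt_id xhat)
  set d : ℝ := (((0 : ℝ) + (0 * Real.sqrt xhat - b * (1 / (2 * Real.sqrt xhat))) / Real.sqrt xhat ^ 2) * q) * xhat
        + ((a + b / Real.sqrt xhat) * q) * 1 with hd
  have hfst : HasFDerivAt (fun p : ℝ × ℝ => p.1)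
      (ContinuousLinearMap.fst ℝ ℝ ℝ) (xhat, r / q) := hasFDerivAt_fst
  have hsnd : HasFDerivAt (fun p : ℝ × ℝ => p.2)
      (ContinuousLinearMap.snd ℝ ℝ ℝ) (xhat, r / q) := hasFDerivAt_snd
  have hu : HasFDerivAt (fun p : ℝ × ℝ => (a + b / Real.sqrt p.1) * q * p.1)
      (d • ContinuousLinearMap.fst ℝ ℝ ℝ) (xhat, r / q) :=
    by have := hφ.comp_hasFDerivAt (xhat, r / q) hfst; exact this
  have h1 : HasFDerivAt (fun p : ℝ × ℝ => r * p.1 - q * p.1 * p.2)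
      ((r • ContinuousLinearMap.fst ℝ ℝ ℝ) -
        ((q * xhat) • ContinuousLinearMap.snd ℝ ℝ ℝ +
          (r / q) • (q • ContinuousLinearMap.fst ℝ ℝ ℝ))) (xhat, r / q) := by
    have := (hfst.const_mul r).sub ((hfst.const_mul q).mul hsnd)
    simp at this; exact this
  have h2 : HasFDerivAt
      (fun p : ℝ × ℝ => α * ((a + b / Real.sqrt p.1) * q * p.1 * p.2 - c * p.2))
      (α • ((((a + b / Real.sqrt xhat) * q * xhat) • ContinuousLinearMap.snd ℝ ℝ ℝ +
          (r / q) • (d • ContinuousLinearMap.fst ℝ ℝ ℝ)) -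
          c • ContinuousLinearMap.snd ℝ ℝ ℝ)) (xhat, r / q) := by
    have := ((hu.mul hsnd).sub (hsnd.const_mul c)).const_mul α
    simpa using this
  refine ⟨_, h1.prodMk h2, ?_⟩
  simp only [ContinuousLinearMap.prod_apply, ContinuousLinearMap.sub_apply,
    ContinuousLinearMap.add_apply, ContinuousLinearMap.smul_apply,
    ContinuousLinearMap.coe_fst', ContinuousLinearMap.coe_snd']
  simp only [smul_eq_mul]
  rw [key]
  field_simp
  ring
end

section
/- In the logistic harvest model with minimum price a, the Fréchet derivative at the no-harvest equilibrium (k, 0) of the vector field G(x,y) = (r x (1 − x/k) − q x y, α ((a + b x^{−z}) q x y − c y)), viewed as a linear map ℝ² → ℝ², has trace −r + α(a q k + b q k^{1−z} − c) and determinant r α (c − a q k − b q k^{1−z}). Consequently, if c > a q k + b q k^{1−z} the determinant is strictly positive and the trace strictly negative (so (k,0) is locally stable), and if c < a q k + b q k^{1−z} the determinant is strictly negative (so (k,0) is a saddle). -/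
/-- in the logistic harvest model with minimum price `a`, the Fréchet
derivative at the no-harvest equilibrium `(k, 0)` has trace
`−r + α(aqk + bqk^(1−z) − c)` and determinant `rα(c − aqk − bqk^(1−z))`; hence `(k,0)`
is locally stable when `c > aqk + bqk^(1−z)` and a saddle when `c < aqk + bqk^(1−z)`. -/
theorem logistic_min_price_carrying_capacity_stability
    (r q c b α a k z : ℝ) (hr : 0 < r) (hq : 0 < q) (hc : 0 < c)
    (hb : 0 < b) (hα : 0 < α) (ha : 0 < a) (hk : 0 < k) (hz : 0 ≤ z) :
    let G : ℝ × ℝ → ℝ × ℝ := fun p =>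
      (r * p.1 * (1 - p.1 / k) - q * p.1 * p.2,
       α * ((a + b * p.1 ^ (-z)) * q * p.1 * p.2 - c * p.2))
    ∃ A : ℝ × ℝ →L[ℝ] ℝ × ℝ, HasFDerivAt G A ((k : ℝ), (0 : ℝ)) ∧
      (A (1, 0)).1 + (A (0, 1)).2 = -r + α * (a * q * k + b * q * k ^ (1 - z) - c) ∧
      (A (1, 0)).1 * (A (0, 1)).2 - (A (0, 1)).1 * (A (1, 0)).2
        = r * α * (c - a * q * k - b * q * k ^ (1 - z)) ∧
      (a * q * k + b * q * k ^ (1 - z) < c →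
        0 < (A (1, 0)).1 * (A (0, 1)).2 - (A (0, 1)).1 * (A (1, 0)).2 ∧
        (A (1, 0)).1 + (A (0, 1)).2 < 0) ∧
      (c < a * q * k + b * q * k ^ (1 - z) →
        (A (1, 0)).1 * (A (0, 1)).2 - (A (0, 1)).1 * (A (1, 0)).2 < 0) := by
  intro G
  have hx : HasFDerivAt (fun p : ℝ × ℝ => p.1)
      (ContinuousLinearMap.fst ℝ ℝ ℝ) ((k : ℝ), (0 : ℝ)) := hasFDerivAt_fst
  have hy : HasFDerivAt (fun p : ℝ × ℝ => p.2)
      (ContinuousLinearMap.snd ℝ ℝ ℝ) ((k : ℝ), (0 : ℝ)) := hasFDerivAt_snd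
  -- first component
  have h1 := (((hx.const_mul r).mul ((hasFDerivAt_const (1:ℝ) _).sub
      (show HasFDerivAt (fun p : ℝ × ℝ => p.1 / k) (k⁻¹ • ContinuousLinearMap.fst ℝ ℝ ℝ) ((k : ℝ), (0 : ℝ)) by simpa [div_eq_mul_inv] using hx.mul_const k⁻¹))).sub ((hx.const_mul q).mul hy))
  -- second component
  have hpow := hx.rpow_const (p := -z) (Or.inl (ne_of_gt hk))
  have h2 := (((((((hasFDerivAt_const (a:ℝ) _).add
      (hpow.const_mul b)).mul_const q).mul hx).mul hy).sub
      (hy.const_mul c)).const_mul α)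
  have hG := h1.prodMk h2
  have hA : r * k * -k⁻¹ + (1 - k / k) * r = -r := by field_simp; ring
  have hpw : b * q * k ^ (1 - z) = b * k ^ (-z) * q * k := by
    rw [show (1 : ℝ) - z = -z + 1 by ring, Real.rpow_add hk, Real.rpow_one]; ring
  refine ⟨_, hG, ?_, ?_, ?_, ?_⟩ <;>
    simp only [ContinuousLinearMap.prod_apply, ContinuousLinearMap.add_apply,
      ContinuousLinearMap.sub_apply, ContinuousLinearMap.smul_apply,
      ContinuousLinearMap.coe_fst', ContinuousLinearMap.coe_snd',
      ContinuousLinearMap.coe_smul', Pi.smul_apply, smul_eq_mul,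
      ContinuousLinearMap.zero_apply, ContinuousLinearMap.neg_apply, ContinuousLinearMap.coe_comp',
      Function.comp_apply, mul_zero, zero_mul, mul_one, one_mul, add_zero, zero_add,
      sub_zero, zero_sub, Pi.add_apply, Pi.sub_apply, Pi.mul_apply]
  · rw [hA, hpw]; ring
  · rw [hA, hpw]; ring
  · intro h
    rw [hpw] at h
    rw [hA]
    have h1 : 0 < c - (a + b * k ^ (-z)) * q * k := by nlinarith
    constructor
    · nlinarith [mul_pos hr (mul_pos hα h1)]
    · have h2 : α * ((a + b * k ^ (-z)) * q * k - c) < 0 :=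
        mul_neg_of_pos_of_neg hα (by nlinarith)
      linarith
  · intro h
    rw [hpw] at h
    rw [hA]
    have h1 : 0 < (a + b * k ^ (-z)) * q * k - c := by nlinarith
    nlinarith [mul_pos hα h1]
end
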